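/- arXiv:2111.06538 — 4 statements merged into one kernel-verified Lean document; each statement's English description precedes it below -/
import Mathlib

section
/- If F is an irreducible singular M-matrix of size n×n and D is a nonzero nonnegative diagonal matrix, then F + D is an irreducible nonsingular M-matrix (all eigenvalues of F + D have strictly positive real part). -/
open Matrix

noncomputable def eigSet {n : ℕ} (A : Matrix (Fin n) (Fin n) ℝ) : Set ℂ :=
  spectrum ℂ (A.map (fun a => (a : ℂ)))

def IsMetzler {n : ℕ} (A : Matrix (Fin n) (Fin n) ℝ) : Prop :=
  ∀ i j, i ≠ j → 0 ≤ A i j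

def IsMMatrix {n : ℕ} (F : Matrix (Fin n) (Fin n) ℝ) : Prop :=
  IsMetzler (-F) ∧ ∀ μ ∈ eigSet F, 0 ≤ μ.re

/-- Irreducibility: no nonempty proper subset of indices is invariant,
i.e. the associated directed graph is strongly connected. -/
def MatIrreducible {n : ℕ} (A : Matrix (Fin n) (Fin n) ℝ) : Prop :=
  ∀ S : Set (Fin n), S.Nonempty → S ≠ Set.univ → ∃ i ∈ S, ∃ j ∉ S, A i j ≠ 0

namespace Stmt1Aux

open Filter Topology

attribute [local instance] Matrix.linftyOpNormedRing Matrix.linftyOpNormedAlgebra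

/-- eigenvector extraction from spectrum membership -/
lemma exists_eigvec {n : ℕ} (A : Matrix (Fin n) (Fin n) ℂ) {μ : ℂ} (h : μ ∈ spectrum ℂ A) :
    ∃ x : Fin n → ℂ, x ≠ 0 ∧ A.mulVec x = μ • x := by
  rw [← AlgEquiv.spectrum_eq (Matrix.toLinAlgEquiv' : Matrix (Fin n) (Fin n) ℂ ≃ₐ[ℂ] _)] at h
  have h2 := Module.End.hasEigenvalue_iff_mem_spectrum.mpr h
  obtain ⟨x, hx⟩ := h2.exists_hasEigenvector
  exact ⟨x, hx.2, hx.apply_eq_smul⟩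

lemma mapC_mulVec {n : ℕ} (M : Matrix (Fin n) (Fin n) ℝ) (w : Fin n → ℝ) (i : Fin n) :
    ((M.map (fun a => (a : ℂ))).mulVec (fun j => (w j : ℂ))) i = ((M.mulVec w i : ℝ) : ℂ) := by
  simp [Matrix.mulVec, dotProduct, Matrix.map_apply]

lemma map_pow_C {n : ℕ} (M : Matrix (Fin n) (Fin n) ℝ) (k : ℕ) :
    (M.map (fun a => (a : ℂ))) ^ k = (M ^ k).map (fun a => (a : ℂ)) := by
  induction k with
  | zero => ext i j; simp [Matrix.map_apply, Matrix.one_apply]; split_ifs <;> simp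
  | succ k ih =>
      rw [pow_succ, pow_succ, ih]
      ext i j
      simp [Matrix.mul_apply, Matrix.map_apply]

lemma map_smul_one_sub {n : ℕ} (c : ℝ) (A : Matrix (Fin n) (Fin n) ℝ) :
    (c • (1 : Matrix (Fin n) (Fin n) ℝ) - A).map (fun x => (x : ℂ))
      = (c : ℂ) • (1 : Matrix (Fin n) (Fin n) ℂ) - A.map (fun x => (x : ℂ)) := by
  ext i j
  by_cases h : i = j <;>
    simp [Matrix.map_apply, Matrix.sub_apply, Matrix.smul_apply, Matrix.one_apply, h]

lemma map_add_smul_one {n : ℕ} (t : ℝ) (A : Matrix (Fin n) (Fin n) ℝ) :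
    (A + t • (1 : Matrix (Fin n) (Fin n) ℝ)).map (fun x => (x : ℂ))
      = A.map (fun x => (x : ℂ)) + (t : ℂ) • (1 : Matrix (Fin n) (Fin n) ℂ) := by
  ext i j
  by_cases h : i = j <;>
    simp [Matrix.map_apply, Matrix.add_apply, Matrix.smul_apply, Matrix.one_apply, h]

/-- Sub-eigenvalue lower bound on the spectrum via Gelfand's formula. -/
lemma subeig {n : ℕ} [NeZero n] (M : Matrix (Fin n) (Fin n) ℝ)
    (hM : ∀ i j, 0 ≤ M i j) (w : Fin n → ℝ) (hw : ∀ i, 0 < w i) (θ : ℝ) (hθ : 0 ≤ θ)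
    (h : ∀ i, θ * w i ≤ M.mulVec w i) :
    ∃ β ∈ spectrum ℂ (M.map (fun a => (a : ℂ))), θ ≤ ‖β‖ := by
  have hne : (Finset.univ : Finset (Fin n)).Nonempty := Finset.univ_nonempty
  have hpow : ∀ k : ℕ, ∀ i, θ ^ k * w i ≤ (M ^ k).mulVec w i := by
    intro k
    induction k with
    | zero => intro i; simp [Matrix.one_mulVec]
    | succ k ih =>
        intro i
        have h1 : (M ^ (k+1)).mulVec w i = M.mulVec ((M ^ k).mulVec w) i := by
          rw [pow_succ', ← Matrix.mulVec_mulVec]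
        rw [h1]
        have h2 : θ ^ k * (M.mulVec w i) ≤ M.mulVec ((M ^ k).mulVec w) i := by
          have : M.mulVec (fun j => θ ^ k * w j) i ≤ M.mulVec ((M ^ k).mulVec w) i := by
            simp only [Matrix.mulVec, dotProduct]
            exact Finset.sum_le_sum fun j _ =>
              mul_le_mul_of_nonneg_left (ih j) (hM i j)
          calc θ ^ k * (M.mulVec w i) = M.mulVec (fun j => θ ^ k * w j) i := by
                simp only [Matrix.mulVec, dotProduct, Finset.mul_sum]; exact Finset.sum_congr rfl fun j _ => by ring
              _ ≤ _ := this
        calc θ ^ (k+1) * w i = θ ^ k * (θ * w i) := by ring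
          _ ≤ θ ^ k * (M.mulVec w i) := by
              exact mul_le_mul_of_nonneg_left (h i) (pow_nonneg hθ k)
          _ ≤ _ := h2
  set a := M.map (fun x => (x : ℂ)) with ha
  obtain ⟨imin, -, hmin⟩ := Finset.exists_min_image Finset.univ w hne
  obtain ⟨imax, -, hmax⟩ := Finset.exists_max_image Finset.univ w hne
  have hminmax : ∀ i, w imin ≤ w i ∧ w i ≤ w imax := fun i =>
    ⟨hmin i (Finset.mem_univ i), hmax i (Finset.mem_univ i)⟩
  have hwmin : 0 < w imin := hw imin
  have hwmax : 0 < w imax := hw imax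
  have hκ : 0 < w imin / w imax := div_pos hwmin hwmax
  have hnormv : ‖(fun j => (w j : ℂ))‖ ≤ w imax := by
    rw [pi_norm_le_iff_of_nonneg hwmax.le]
    intro i
    rw [Complex.norm_real, Real.norm_of_nonneg (hw i).le]
    exact (hminmax i).2
  have hnorm : ∀ k : ℕ, θ ^ k * (w imin / w imax) ≤ ‖a ^ k‖ := by
    intro k
    have h1 : θ ^ k * w imin ≤ ‖(a ^ k).mulVec (fun j => (w j : ℂ))‖ := by
      have h2 : ‖((a ^ k).mulVec (fun j => (w j : ℂ))) imin‖ ≤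
          ‖(a ^ k).mulVec (fun j => (w j : ℂ))‖ := norm_le_pi_norm _ imin
      have h3 : ((a ^ k).mulVec (fun j => (w j : ℂ))) imin
          = (((M ^ k).mulVec w imin : ℝ) : ℂ) := by
        rw [ha, map_pow_C]; exact mapC_mulVec _ _ _
      rw [h3, Complex.norm_real] at h2
      refine le_trans ?_ h2
      calc θ ^ k * w imin ≤ θ ^ k * w imin := le_rfl
        _ ≤ (M ^ k).mulVec w imin := hpow k imin
        _ ≤ |((M ^ k).mulVec w) imin| := le_abs_self _
        _ = ‖((M ^ k).mulVec w) imin‖ := (Real.norm_eq_abs _).symm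
    have h4 : ‖(a ^ k).mulVec (fun j => (w j : ℂ))‖ ≤ ‖a ^ k‖ * w imax := by
      refine le_trans (Matrix.linfty_opNorm_mulVec _ _) ?_
      exact mul_le_mul_of_nonneg_left hnormv (norm_nonneg _)
    have h5 := le_trans h1 h4
    calc θ ^ k * (w imin / w imax) = θ ^ k * w imin / w imax := by ring
      _ ≤ ‖a ^ k‖ * w imax / w imax := by
          exact div_le_div_of_nonneg_right h5 hwmax.le
      _ = ‖a ^ k‖ := by field_simp
  set θ' : NNReal := θ.toNNReal with hθ'def
  set κ' : NNReal := (w imin / w imax).toNNReal with hκ'def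
  have hκ'pos : 0 < κ' := Real.toNNReal_pos.mpr hκ
  have hk2 : ∀ k : ℕ, (θ' ^ k * κ' : NNReal) ≤ ‖a ^ k‖₊ := by
    intro k
    rw [← NNReal.coe_le_coe]
    push_cast
    rw [Real.coe_toNNReal _ hθ, Real.coe_toNNReal _ hκ.le]
    exact hnorm k
  have hg := spectrum.pow_nnnorm_pow_one_div_tendsto_nhds_spectralRadius a
  have hreal : Tendsto (fun k : ℕ => ((w imin / w imax) : ℝ) ^ (1 / (k : ℝ))) atTop (𝓝 1) := by
    have hc : ContinuousAt (fun x : ℝ => (w imin / w imax) ^ x) 0 :=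
      Real.continuousAt_const_rpow hκ.ne'
    have h6 := hc.tendsto.comp tendsto_one_div_atTop_nhds_zero_nat
    simpa [Real.rpow_zero, Function.comp_def] using h6
  have h1 : Tendsto (fun k : ℕ => ((κ' ^ (1/(k:ℝ)) : NNReal) : ENNReal)) atTop
      (𝓝 (((1 : NNReal) : ENNReal))) := by
    rw [ENNReal.tendsto_coe, ← NNReal.tendsto_coe]
    simpa [hκ'def, NNReal.coe_rpow, Real.coe_toNNReal _ hκ.le] using hreal
  have h2 : (fun k : ℕ => ((κ' ^ (1/(k:ℝ)) : NNReal) : ENNReal))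
      = fun k : ℕ => (κ' : ENNReal) ^ (1/(k:ℝ)) := by
    funext k; rw [ENNReal.coe_rpow_of_ne_zero hκ'pos.ne']
  rw [h2] at h1
  have hf : Tendsto (fun k : ℕ => (θ' : ENNReal) * (κ' : ENNReal) ^ (1 / (k:ℕ) : ℝ)) atTop
      (𝓝 ((θ' : ENNReal) * 1)) := by
    push_cast at h1 ⊢
    exact ENNReal.Tendsto.const_mul h1 (Or.inr ENNReal.coe_ne_top)
  have hev : ∀ᶠ k : ℕ in atTop, (θ' : ENNReal) * (κ' : ENNReal) ^ (1 / (k:ℕ) : ℝ)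
      ≤ (‖a ^ k‖₊ : ENNReal) ^ (1 / (k:ℕ) : ℝ) := by
    refine Filter.eventually_atTop.mpr ⟨1, fun k hk => ?_⟩
    have hk0 : (k : ℝ) ≠ 0 := Nat.cast_ne_zero.mpr (Nat.one_le_iff_ne_zero.mp hk)
    have hb : ((θ' ^ k * κ' : NNReal) : ENNReal) ≤ (‖a ^ k‖₊ : ENNReal) :=
      ENNReal.coe_le_coe.mpr (hk2 k)
    have hb2 := ENNReal.rpow_le_rpow hb (by positivity : (0:ℝ) ≤ 1 / (k:ℕ))
    calc (θ' : ENNReal) * (κ' : ENNReal) ^ (1 / (k:ℕ) : ℝ)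
        = ((θ' ^ k * κ' : NNReal) : ENNReal) ^ (1 / (k:ℕ) : ℝ) := by
          push_cast
          rw [ENNReal.mul_rpow_of_nonneg _ _ (by positivity : (0:ℝ) ≤ 1 / (k:ℕ))]
          rw [← ENNReal.rpow_natCast (θ' : ENNReal) k, ← ENNReal.rpow_mul,
            mul_one_div_cancel hk0, ENNReal.rpow_one]
      _ ≤ _ := hb2
  have hle : (θ' : ENNReal) ≤ spectralRadius ℂ a := by
    have h7 := le_of_tendsto_of_tendsto hf hg hev
    simpa using h7
  obtain ⟨β, hβ, hβeq⟩ := spectrum.exists_nnnorm_eq_spectralRadius a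
  refine ⟨β, hβ, ?_⟩
  rw [← hβeq] at hle
  have h8 : θ' ≤ ‖β‖₊ := by exact_mod_cast hle
  calc θ = (θ' : ℝ) := (Real.coe_toNNReal _ hθ).symm
    _ ≤ ‖β‖ := h8

set_option maxHeartbeats 1000000 in
/-- No positive sub-eigenvector with rate exceeding the spectral abscissa. -/
lemma no_subeig {n : ℕ} [NeZero n] (B : Matrix (Fin n) (Fin n) ℝ)
    (hB : ∀ i j, 0 ≤ B i j) (c θ : ℝ) (hcθ : c < θ)
    (w : Fin n → ℝ) (hw : ∀ i, 0 < w i) (hsub : ∀ i, θ * w i ≤ B.mulVec w i)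
    (hspec : ∀ β ∈ spectrum ℂ (B.map (fun x => (x : ℂ))), β.re ≤ c) : False := by
  obtain ⟨NB, hNBdef⟩ : ∃ NB : ℝ, NB = ‖B.map (fun x => (x : ℂ))‖ := ⟨_, rfl⟩
  have hNB0 : 0 ≤ NB := hNBdef ▸ norm_nonneg _
  obtain ⟨δ, hδ⟩ : ∃ δ : ℝ, δ = θ - c := ⟨_, rfl⟩
  have hδ0 : 0 < δ := by rw [hδ]; linarith
  obtain ⟨t, ht⟩ : ∃ t : ℝ, t = |c| + |θ| + NB + NB ^ 2 / (2 * δ) + 1 := ⟨_, rfl⟩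
  have h1 : 0 ≤ NB ^ 2 / (2 * δ) := by positivity
  have habsc := abs_nonneg c
  have habsθ := abs_nonneg θ
  have hnegc := neg_abs_le c
  have hlec := le_abs_self c
  have hnegθ := neg_abs_le θ
  have ht0 : 0 ≤ t := by rw [ht]; linarith
  have hθt : 0 ≤ θ + t := by linarith
  set M' : Matrix (Fin n) (Fin n) ℝ := B + t • 1 with hM'
  have hM'nn : ∀ i j, 0 ≤ M' i j := by
    intro i j
    by_cases h : i = j
    · subst h
      have h2 := hB i i
      simp only [hM', Matrix.add_apply, Matrix.smul_apply, Matrix.one_apply_eq, smul_eq_mul,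
        mul_one]
      linarith
    · simpa [hM', Matrix.add_apply, Matrix.smul_apply, Matrix.one_apply, h] using hB i j
  have hM'sub : ∀ i, (θ + t) * w i ≤ M'.mulVec w i := by
    intro i
    have h3 : M'.mulVec w i = B.mulVec w i + t * w i := by
      simp [hM', Matrix.add_mulVec, Matrix.smul_mulVec, Matrix.one_mulVec]
    rw [h3]
    have := hsub i
    nlinarith [hw i]
  obtain ⟨β', hβ'mem, hβ'⟩ := subeig M' hM'nn w hw (θ + t) hθt hM'sub
  have hmap : M'.map (fun x => (x : ℂ))
      = B.map (fun x => (x : ℂ)) + algebraMap ℂ (Matrix (Fin n) (Fin n) ℂ) (t : ℂ) := by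
    rw [hM', map_add_smul_one, Algebra.algebraMap_eq_smul_one]
  rw [hmap, ← spectrum.add_singleton_eq] at hβ'mem
  obtain ⟨β, hβ, s, hs, hsum⟩ := Set.mem_add.mp hβ'mem
  rw [Set.mem_singleton_iff] at hs
  subst hs
  have hre : β.re ≤ c := hspec β hβ
  have hnb : ‖β‖ ≤ NB := hNBdef ▸ spectrum.norm_le_norm_of_mem hβ
  have him : |β.im| ≤ NB := le_trans (Complex.abs_im_le_norm β) (by
    exact hnb)
  have hre2 : |β.re| ≤ NB := le_trans (Complex.abs_re_le_norm β) (by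
    exact hnb)
  have hnorm2 : ‖β + (t : ℂ)‖ ^ 2 = (β.re + t) ^ 2 + β.im ^ 2 := by
    rw [Complex.sq_norm, Complex.normSq_apply]
    simp
    ring
  have h9 : (θ + t) ^ 2 ≤ (β.re + t) ^ 2 + β.im ^ 2 := by
    rw [← hnorm2]
    rw [← hsum] at hβ'
    nlinarith [norm_nonneg (β + (t : ℂ))]
  have h10 : 0 ≤ β.re + t := by
    have := neg_abs_le β.re
    rw [ht]; linarith
  have h11 : (β.re + t) ^ 2 ≤ (c + t) ^ 2 := by nlinarith
  have h12 : β.im ^ 2 ≤ NB ^ 2 := by nlinarith [abs_nonneg β.im, neg_abs_le β.im, le_abs_self β.im]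
  have hkey : NB ^ 2 / (2 * δ) * (2 * δ) = NB ^ 2 := by
    field_simp
  have hθeq : θ = c + δ := by rw [hδ]; ring
  nlinarith [h9, h11, h12, hδ0, hkey, ht, hθeq]

lemma mulVec_nonneg {n : ℕ} (B : Matrix (Fin n) (Fin n) ℝ) (hB : ∀ i j, 0 ≤ B i j)
    (v : Fin n → ℝ) (hv : ∀ i, 0 ≤ v i) (i : Fin n) : 0 ≤ B.mulVec v i := by
  have := Finset.sum_nonneg (s := Finset.univ) (f := fun j => B i j * v j)
    (fun j _ => mul_nonneg (hB i j) (hv j))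
  simpa [Matrix.mulVec, dotProduct] using this

lemma iterate_pos {n : ℕ} (B : Matrix (Fin n) (Fin n) ℝ) (hB : ∀ i j, 0 ≤ B i j)
    (hirr : MatIrreducible B) :
    ∀ (k : ℕ) (v : Fin n → ℝ), (∀ i, 0 ≤ v i) → v ≠ 0 →
      n ≤ k + (Finset.univ.filter (fun i => 0 < v i)).card →
      ∀ i, 0 < (((1 : Module.End ℝ (Fin n → ℝ)) + B.mulVecLin) ^ k) v i := by
  intro k
  induction k with
  | zero =>
      intro v hv hvne hcard i
      have huniv : (Finset.univ.filter (fun i => 0 < v i)) = Finset.univ := by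
        apply Finset.eq_univ_of_card
        have h1 := Finset.card_le_univ (Finset.univ.filter (fun i => 0 < v i))
        rw [Fintype.card_fin] at h1 ⊢
        omega
      have : i ∈ Finset.univ.filter (fun i => 0 < v i) := by rw [huniv]; exact Finset.mem_univ i
      simpa [pow_zero, Module.End.one_apply] using (Finset.mem_filter.mp this).2
  | succ k ih =>
      intro v hv hvne hcard
      set T := (1 : Module.End ℝ (Fin n → ℝ)) + B.mulVecLin with hT
      have hTapp : ∀ (u : Fin n → ℝ) (i : Fin n), T u i = u i + B.mulVec u i := by
        intro u i
        simp [hT, Matrix.mulVecLin_apply]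
      have hstep : (T ^ (k + 1)) v = (T ^ k) (T v) := by
        rw [pow_succ, Module.End.mul_apply]
      have hTv0 : ∀ i, 0 ≤ T v i := by
        intro i
        rw [hTapp]
        have := mulVec_nonneg B hB v hv i
        have := hv i
        linarith
      have hmono : ∀ i, 0 < v i → 0 < T v i := by
        intro i hi
        rw [hTapp]
        have := mulVec_nonneg B hB v hv i
        linarith
      -- some positive entry of v
      obtain ⟨j0, hj0⟩ : ∃ j, v j ≠ 0 := Function.ne_iff.mp hvne
      have hj0pos : 0 < v j0 := lt_of_le_of_ne (hv j0) (Ne.symm hj0)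
      have hTvne : T v ≠ 0 := by
        intro h0
        have := hmono j0 hj0pos
        rw [h0] at this
        simp at this
      have hsubset : Finset.univ.filter (fun i => 0 < v i)
          ⊆ Finset.univ.filter (fun i => 0 < T v i) := by
        intro i hi
        rw [Finset.mem_filter] at hi ⊢
        exact ⟨Finset.mem_univ i, hmono i hi.2⟩
      have hcard' : n ≤ k + (Finset.univ.filter (fun i => 0 < T v i)).card := by
        by_cases huniv : Finset.univ.filter (fun i => 0 < v i) = Finset.univ
        · have h2 : Finset.univ.filter (fun i => 0 < T v i) = Finset.univ :=
            Finset.eq_univ_of_forall fun i => hsubset (by rw [huniv]; exact Finset.mem_univ i)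
          rw [h2, Finset.card_univ, Fintype.card_fin]
          omega
        · -- strict growth via irreducibility
          have hSne : ({i : Fin n | ¬ 0 < v i} : Set (Fin n)).Nonempty := by
            by_contra h
            apply huniv
            apply Finset.eq_univ_of_forall
            intro i
            rw [Finset.mem_filter]
            refine ⟨Finset.mem_univ i, ?_⟩
            by_contra hni
            exact h ⟨i, hni⟩
          have hSnuniv : ({i : Fin n | ¬ 0 < v i} : Set (Fin n)) ≠ Set.univ := by
            intro h
            have : j0 ∈ ({i : Fin n | ¬ 0 < v i} : Set (Fin n)) := h ▸ Set.mem_univ j0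
            exact this hj0pos
          obtain ⟨i0, hi0, j1, hj1, hBij⟩ := hirr _ hSne hSnuniv
          have hvi0 : v i0 = 0 := le_antisymm (not_lt.mp hi0) (hv i0)
          have hvj1 : 0 < v j1 := not_not.mp hj1
          have hBij' : 0 < B i0 j1 := lt_of_le_of_ne (hB i0 j1) (Ne.symm hBij)
          have hnew : 0 < T v i0 := by
            rw [hTapp, hvi0, zero_add]
            have hle : B i0 j1 * v j1 ≤ B.mulVec v i0 :=
              Finset.single_le_sum (f := fun m => B i0 m * v m)
                (fun m _ => mul_nonneg (hB i0 m) (hv m)) (Finset.mem_univ j1)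
            nlinarith
          have hssub : Finset.univ.filter (fun i => 0 < v i)
              ⊂ Finset.univ.filter (fun i => 0 < T v i) := by
            refine ⟨hsubset, fun hcon => ?_⟩
            have : i0 ∈ Finset.univ.filter (fun i => 0 < v i) :=
              hcon (Finset.mem_filter.mpr ⟨Finset.mem_univ i0, hnew⟩)
            exact hi0 (Finset.mem_filter.mp this).2
          have := Finset.card_lt_card hssub
          omega
      intro i
      rw [hstep]
      exact ih (T v) hTv0 hTvne hcard' i

end Stmt1Aux

theorem stmt1 {n : ℕ} (F D : Matrix (Fin n) (Fin n) ℝ)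
    (hF : IsMMatrix F) (hFirr : MatIrreducible F) (hFsing : (0 : ℂ) ∈ eigSet F)
    (hDdiag : ∀ i j, i ≠ j → D i j = 0) (hDnonneg : ∀ i, 0 ≤ D i i)
    (hDne : D ≠ 0) :
    MatIrreducible (F + D) ∧ IsMetzler (-(F + D)) ∧
      ∀ μ ∈ eigSet (F + D), 0 < μ.re := by
  have hirrFD : MatIrreducible (F + D) := by
    intro S hS1 hS2
    obtain ⟨i, hi, j, hj, hij⟩ := hFirr S hS1 hS2
    have hne : i ≠ j := fun h => hj (h ▸ hi)
    refine ⟨i, hi, j, hj, ?_⟩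
    simpa [Matrix.add_apply, hDdiag i j hne] using hij
  have hmetz : IsMetzler (-(F + D)) := by
    intro i j hij
    have h1 := hF.1 i j hij
    simp only [Matrix.neg_apply, Matrix.add_apply, hDdiag i j hij, add_zero]
    simpa using h1
  refine ⟨hirrFD, hmetz, ?_⟩
  intro μ hμ
  have hn : NeZero n := by
    constructor
    intro h0
    apply hDne
    subst h0
    ext i j
    exact i.elim0
  have hune : (Finset.univ : Finset (Fin n)).Nonempty := Finset.univ_nonempty
  set c : ℝ := Finset.univ.sup' hune (fun i => F i i + D i i) with hcdef
  have hcge : ∀ i, F i i + D i i ≤ c := by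
    intro i
    rw [hcdef]
    exact Finset.le_sup' (fun i => F i i + D i i) (Finset.mem_univ i)
  set B : Matrix (Fin n) (Fin n) ℝ := c • 1 - F with hBdef
  have hBentry : ∀ i j, B i j = c * (if i = j then 1 else 0) - F i j := by
    intro i j; simp [hBdef, Matrix.sub_apply, Matrix.smul_apply, Matrix.one_apply]
  have hBnn : ∀ i j, 0 ≤ B i j := by
    intro i j
    rw [hBentry]
    by_cases h : i = j
    · subst h; simp only [eq_self_iff_true, if_true, mul_one]
      have h2 := hcge i; have h3 := hDnonneg i; linarith
    · simp only [if_neg h, mul_zero, zero_sub]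
      have h4 := hF.1 i j h
      simpa using h4
  have hBirr : MatIrreducible B := by
    intro S h1 h2
    obtain ⟨i, hi, j, hj, hij⟩ := hFirr S h1 h2
    have hne : i ≠ j := fun h => hj (h ▸ hi)
    refine ⟨i, hi, j, hj, ?_⟩
    rw [hBentry]
    simp only [if_neg hne, mul_zero, zero_sub]
    exact neg_ne_zero.mpr hij
  have hμ' : μ ∈ spectrum ℂ ((F + D).map (fun a => (a : ℂ))) := hμ
  obtain ⟨x, hx0, hxe⟩ := Stmt1Aux.exists_eigvec _ hμ'
  set y : Fin n → ℝ := fun i => ‖x i‖ with hydef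
  have hy0 : ∀ i, 0 ≤ y i := fun i => norm_nonneg (x i)
  have hyne : y ≠ 0 := by
    obtain ⟨i, hi⟩ := Function.ne_iff.mp hx0
    intro h
    apply hi
    have h2 := congrFun h i
    simpa [hydef] using h2
  set C : Matrix (Fin n) (Fin n) ℝ := B - D with hCdef
  have hCentry : ∀ i j, C i j = c * (if i = j then 1 else 0) - (F + D) i j := by
    intro i j
    by_cases h : i = j
    · subst h
      simp only [hCdef, Matrix.sub_apply, hBentry, Matrix.add_apply, eq_self_iff_true, if_true]
      ring
    · simp only [hCdef, Matrix.sub_apply, hBentry, Matrix.add_apply, if_neg h,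
        hDdiag i j h]
      ring
  have hCnn : ∀ i j, 0 ≤ C i j := by
    intro i j
    rw [hCentry]
    by_cases h : i = j
    · subst h
      simp only [eq_self_iff_true, if_true, mul_one, Matrix.add_apply]
      have h2 := hcge i
      linarith
    · simp only [if_neg h, mul_zero, zero_sub, Matrix.add_apply, hDdiag i j h, add_zero]
      have h4 := hF.1 i j h
      simpa using h4
  have hCeq : C = c • (1 : Matrix (Fin n) (Fin n) ℝ) - (F + D) := by
    ext i j
    rw [hCentry]
    simp [Matrix.sub_apply, Matrix.smul_apply, Matrix.one_apply]
  have hCx : (C.map (fun a => (a : ℂ))).mulVec x = ((c : ℂ) - μ) • x := by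
    rw [hCeq, Stmt1Aux.map_smul_one_sub]
    rw [Matrix.sub_mulVec, Matrix.smul_mulVec, Matrix.one_mulVec, hxe]
    funext i
    simp only [Pi.sub_apply, Pi.smul_apply, smul_eq_mul]
    ring
  set lam : ℂ := (c : ℂ) - μ with hlam
  set r : ℝ := ‖lam‖ with hrdef
  have hsubC : ∀ i, r * y i ≤ C.mulVec y i := by
    intro i
    have h1 : (C.map (fun a => (a : ℂ))).mulVec x i = lam * x i := by
      rw [hCx]; simp [hlam]
    have h2 : ‖(C.map (fun a => (a : ℂ))).mulVec x i‖ = r * y i := by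
      rw [h1, norm_mul]
    rw [← h2]
    have h3 : (C.map (fun a => (a : ℂ))).mulVec x i = ∑ j, (C i j : ℂ) * x j := rfl
    have h4 : C.mulVec y i = ∑ j, C i j * y j := rfl
    rw [h3, h4]
    refine le_trans (norm_sum_le _ _) ?_
    refine le_of_eq (Finset.sum_congr rfl fun j _ => ?_)
    rw [norm_mul, Complex.norm_real, Real.norm_of_nonneg (hCnn i j)]
  have hkey : r < c := by
    by_contra hr
    push_neg at hr
    have hyB : ∀ i, c * y i + D i i * y i ≤ B.mulVec y i := by
      intro i
      have h1 : B.mulVec y i = C.mulVec y i + D.mulVec y i := by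
        have : B = C + D := by rw [hCdef]; abel
        rw [this, Matrix.add_mulVec]
        rfl
      have h2 : D.mulVec y i = D i i * y i := by
        have h5 : D.mulVec y i = ∑ j, D i j * y j := rfl
        rw [h5, Finset.sum_eq_single i]
        · intro j _ hji
          rw [hDdiag i j (Ne.symm hji), zero_mul]
        · intro h; exact absurd (Finset.mem_univ i) h
      have h3 : c * y i ≤ r * y i := mul_le_mul_of_nonneg_right hr (hy0 i)
      have h6 := hsubC i
      linarith
    set z : Fin n → ℝ := fun i => B.mulVec y i - c * y i with hzdef
    have hz0 : ∀ i, 0 ≤ z i := by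
      intro i
      have h7 := hyB i
      have h8 := mul_nonneg (hDnonneg i) (hy0 i)
      simp only [hzdef]
      linarith
    by_cases hz : z = 0
    · -- z = 0 : y is a positive eigenvector, forcing D = 0
      have hBy : ∀ i, B.mulVec y i = c * y i := by
        intro i
        have := congrFun hz i
        simp only [hzdef, Pi.zero_apply] at this
        linarith
      have hDy : ∀ i, D i i * y i = 0 := by
        intro i
        have h7 := hyB i
        rw [hBy i] at h7
        have h8 := mul_nonneg (hDnonneg i) (hy0 i)
        linarith
      have hypos : ∀ i, 0 < y i := by
        by_contra h
        push_neg at h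
        obtain ⟨i, hi⟩ := h
        have hSne : ({i' : Fin n | y i' ≤ 0} : Set (Fin n)).Nonempty := ⟨i, hi⟩
        have hSnuniv : ({i' : Fin n | y i' ≤ 0} : Set (Fin n)) ≠ Set.univ := by
          intro hcon
          obtain ⟨j, hj⟩ := Function.ne_iff.mp hyne
          have hjpos : 0 < y j := lt_of_le_of_ne (hy0 j) (Ne.symm hj)
          have : j ∈ ({i' : Fin n | y i' ≤ 0} : Set (Fin n)) := hcon ▸ Set.mem_univ j
          exact absurd hjpos (not_lt.mpr this)
        obtain ⟨i1, hi1, j1, hj1, hBij⟩ := hBirr _ hSne hSnuniv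
        have hyi1 : y i1 = 0 := le_antisymm hi1 (hy0 i1)
        have hyj1 : 0 < y j1 := not_le.mp hj1
        have hB1 : 0 < B i1 j1 := lt_of_le_of_ne (hBnn i1 j1) (Ne.symm hBij)
        have h4 : B i1 j1 * y j1 ≤ B.mulVec y i1 := by
          have h5 : B.mulVec y i1 = ∑ j, B i1 j * y j := rfl
          rw [h5]
          exact Finset.single_le_sum (f := fun m => B i1 m * y m)
            (fun m _ => mul_nonneg (hBnn i1 m) (hy0 m)) (Finset.mem_univ j1)
        rw [hBy i1, hyi1, mul_zero] at h4
        nlinarith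
      apply hDne
      ext i j
      by_cases h : i = j
      · subst h
        have h7 := hDy i
        have h8 := (hypos i).ne'
        simpa [mul_eq_zero, h8] using h7
      · simp [hDdiag i j h]
    · -- z ≠ 0 : strict sub-eigenvector, contradiction with spectral bound
      set T := (1 : Module.End ℝ (Fin n → ℝ)) + B.mulVecLin with hT
      set w := (T ^ (n - 1)) y with hwdef
      set p := (T ^ (n - 1)) z with hpdef
      have hcard1 : ∀ v : Fin n → ℝ, (∀ i, 0 ≤ v i) → v ≠ 0 →
          n ≤ (n - 1) + (Finset.univ.filter fun i => 0 < v i).card := by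
        intro v hv hvne
        obtain ⟨i, hi⟩ := Function.ne_iff.mp hvne
        have hipos : 0 < v i := lt_of_le_of_ne (hv i) (Ne.symm hi)
        have hmem : i ∈ Finset.univ.filter (fun i' => 0 < v i') :=
          Finset.mem_filter.mpr ⟨Finset.mem_univ i, hipos⟩
        have hc := Finset.card_pos.mpr ⟨i, hmem⟩
        have hn1 : 1 ≤ n := Nat.one_le_iff_ne_zero.mpr hn.out
        omega
      have hwpos : ∀ i, 0 < w i :=
        Stmt1Aux.iterate_pos B hBnn hBirr (n - 1) y hy0 hyne (hcard1 y hy0 hyne)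
      have hppos : ∀ i, 0 < p i :=
        Stmt1Aux.iterate_pos B hBnn hBirr (n - 1) z hz0 hz (hcard1 z hz0 hz)
      have hcomm : B.mulVecLin * T ^ (n - 1) = T ^ (n - 1) * B.mulVecLin := by
        have h5 : Commute (B.mulVecLin) T := by
          rw [hT]
          exact (Commute.one_right _).add_right (Commute.refl _)
        exact (h5.pow_right (n - 1)).eq
      have hBy2 : B.mulVecLin y = c • y + z := by
        funext i
        simp only [Matrix.mulVecLin_apply, Pi.add_apply, Pi.smul_apply, smul_eq_mul, hzdef]
        ring
      have hBw : B.mulVec w = c • w + p := by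
        have h6 : B.mulVecLin ((T ^ (n - 1)) y) = (T ^ (n - 1)) (B.mulVecLin y) := by
          have h7 := LinearMap.congr_fun hcomm y
          simpa [Module.End.mul_apply] using h7
        have h8 : B.mulVec w = B.mulVecLin w := rfl
        rw [h8, hwdef, h6, hBy2, _root_.map_add, _root_.map_smul]
      obtain ⟨i0, -, hi0min⟩ := Finset.exists_min_image Finset.univ (fun i => p i / w i) hune
      set ε := p i0 / w i0 with hε
      have hεpos : 0 < ε := div_pos (hppos i0) (hwpos i0)
      have hsubw : ∀ i, (c + ε) * w i ≤ B.mulVec w i := by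
        intro i
        have h7 : ε ≤ p i / w i := hi0min i (Finset.mem_univ i)
        have h8 : ε * w i ≤ p i := (le_div_iff₀ (hwpos i)).mp h7
        have h9 : B.mulVec w i = c * w i + p i := by
          rw [hBw]; simp
        rw [h9]
        nlinarith
      have hspecB : ∀ β ∈ spectrum ℂ (B.map (fun a => (a : ℂ))), β.re ≤ c := by
        intro β hβ
        rw [hBdef, Stmt1Aux.map_smul_one_sub,
          show ((c : ℂ) • (1 : Matrix (Fin n) (Fin n) ℂ))
            = algebraMap ℂ (Matrix (Fin n) (Fin n) ℂ) (c : ℂ) from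
            (Algebra.algebraMap_eq_smul_one _).symm,
          ← spectrum.singleton_sub_eq] at hβ
        obtain ⟨s, hs, μ2, hμ2, hsum⟩ := Set.mem_sub.mp hβ
        rw [Set.mem_singleton_iff] at hs
        subst hs
        have h10 : (0 : ℝ) ≤ μ2.re := hF.2 μ2 hμ2
        have h11 : β.re = c - μ2.re := by rw [← hsum]; simp
        linarith
      exact Stmt1Aux.no_subeig B hBnn c (c + ε) (by linarith) w hwpos hsubw hspecB
  have hlre : lam.re ≤ r := by rw [hrdef]; exact Complex.re_le_norm lam
  have hμre : lam.re = c - μ.re := by rw [hlam]; simp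
  linarith
end

section
/- Let A be an n×n irreducible nonnegative matrix with ρ(A) > 1 and x̄ with 0 < x̄ < 1 entrywise satisfying [-I + (I - X̄)A] x̄ = 0 with X̄ = diag(x̄). Then the spectral abscissa of -I + (I - X̄)A equals 0, it is a simple eigenvalue, and the associated left eigenvector u and right eigenvector x̄ can be chosen with all entries strictly positive, and are unique up to positive scaling. -/
open Matrix

/-- Right kernel of `B - 1`: every real solution of `B y = y` is a multiple of `xbar`. -/
lemma pf_right_ker {n : ℕ} (hn : 0 < n) (B : Matrix (Fin n) (Fin n) ℝ) (xbar : Fin n → ℝ)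
    (hpos : ∀ i, 0 < xbar i) (hBnn : ∀ i j, 0 ≤ B i j)
    (hBirr : ∀ S : Set (Fin n), S.Nonempty → S ≠ Set.univ → ∃ i ∈ S, ∃ j ∉ S, B i j ≠ 0)
    (hBx : B.mulVec xbar = xbar) (y : Fin n → ℝ) (hy : B.mulVec y = y) :
    ∃ t : ℝ, y = t • xbar := by
  have : Nonempty (Fin n) := ⟨⟨0, hn⟩⟩
  obtain ⟨i0, -, hi0⟩ := Finset.exists_min_image Finset.univ (fun i => y i / xbar i)
    ⟨Classical.arbitrary _, Finset.mem_univ _⟩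
  set t : ℝ := y i0 / xbar i0 with ht
  refine ⟨t, ?_⟩
  set w : Fin n → ℝ := y - t • xbar with hw
  have hwnn : ∀ i, 0 ≤ w i := by
    intro i
    have h1 : t ≤ y i / xbar i := hi0 i (Finset.mem_univ _)
    have := (le_div_iff₀ (hpos i)).mp h1
    simp [hw]
    linarith
  have hww : B.mulVec w = w := by
    rw [hw, Matrix.mulVec_sub, Matrix.mulVec_smul, hBx, hy]
  have hwi0 : w i0 = 0 := by
    simp [hw, ht, div_mul_cancel₀ _ (hpos i0).ne']
  have hwzero : ∀ i, w i = 0 := by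
    by_contra hcon
    push_neg at hcon
    obtain ⟨j, hj⟩ := hcon
    have hSne : ({i | w i = 0} : Set (Fin n)) ≠ Set.univ := by
      intro h
      exact hj ((Set.eq_univ_iff_forall.mp h) j)
    obtain ⟨i, hiS, j', hj'S, hBij⟩ := hBirr {i | w i = 0} ⟨i0, hwi0⟩ hSne
    have hsum : ∑ k, B i k * w k = 0 := by
      have := congrFun hww i
      simpa [Matrix.mulVec, dotProduct, hiS.out] using this
    have hterm := (Finset.sum_eq_zero_iff_of_nonneg
      (fun k _ => mul_nonneg (hBnn i k) (hwnn k))).mp hsum j' (Finset.mem_univ _)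
    rcases mul_eq_zero.mp hterm with h | h
    · exact hBij h
    · exact hj'S h
  exact sub_eq_zero.mp (by simpa [hw] using (funext hwzero : w = 0))
open Matrix

/-- Existence of a strictly positive left fixed vector of `B`. -/
lemma pf_left_exists {n : ℕ} (hn : 0 < n) (B : Matrix (Fin n) (Fin n) ℝ) (xbar : Fin n → ℝ)
    (hpos : ∀ i, 0 < xbar i) (hBnn : ∀ i j, 0 ≤ B i j)
    (hBirr : ∀ S : Set (Fin n), S.Nonempty → S ≠ Set.univ → ∃ i ∈ S, ∃ j ∉ S, B i j ≠ 0)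
    (hBx : B.mulVec xbar = xbar) :
    ∃ u : Fin n → ℝ, (∀ i, 0 < u i) ∧ Matrix.vecMul u B = u := by
  -- det (B - 1) = 0
  have hxne : xbar ≠ 0 := by
    intro h
    exact (hpos ⟨0, hn⟩).ne' (congrFun h ⟨0, hn⟩)
  have hdet : (B - 1).det = 0 := by
    rw [← Matrix.exists_mulVec_eq_zero_iff]
    exact ⟨xbar, hxne, by rw [Matrix.sub_mulVec, Matrix.one_mulVec, hBx, sub_self]⟩
  have hdetT : ((B - 1)ᵀ).det = 0 := by rw [Matrix.det_transpose]; exact hdet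
  obtain ⟨v, hvne, hv⟩ := Matrix.exists_mulVec_eq_zero_iff.mpr hdetT
  have hvB : Matrix.vecMul v B = v := by
    have : (B - 1)ᵀ.mulVec v = Matrix.vecMul v B - v := by
      rw [Matrix.mulVec_transpose, Matrix.vecMul_sub, Matrix.vecMul_one]
    rw [this] at hv
    exact sub_eq_zero.mp hv
  set u : Fin n → ℝ := fun i => |v i| with hu
  -- u B ≥ u entrywise
  have hub : ∀ j, u j ≤ (Matrix.vecMul u B) j := by
    intro j
    have : |(Matrix.vecMul v B) j| ≤ ∑ i, |v i| * B i j := by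
      rw [Matrix.vecMul, dotProduct]
      calc |∑ i, v i * B i j| ≤ ∑ i, |v i * B i j| := Finset.abs_sum_le_sum_abs _ _
        _ = ∑ i, |v i| * B i j := by
            refine Finset.sum_congr rfl fun i _ => ?_
            rw [abs_mul, abs_of_nonneg (hBnn i j)]
    rw [hvB] at this
    simpa [hu, Matrix.vecMul, dotProduct] using this
  -- equality via pairing with xbar
  have hsum : ∑ j, ((Matrix.vecMul u B) j - u j) * xbar j = 0 := by
    have h1 : Matrix.vecMul u B ⬝ᵥ xbar = u ⬝ᵥ xbar := by
      rw [← Matrix.dotProduct_mulVec, hBx]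
    simp only [sub_mul, Finset.sum_sub_distrib]
    simpa [dotProduct] using sub_eq_zero.mpr h1
  have huB : Matrix.vecMul u B = u := by
    have hterm := (Finset.sum_eq_zero_iff_of_nonneg
      (fun j _ => mul_nonneg (sub_nonneg.mpr (hub j)) (hpos j).le)).mp hsum
    funext j
    have := hterm j (Finset.mem_univ j)
    rcases mul_eq_zero.mp this with h | h
    · linarith [sub_eq_zero.mp h]
    · exact absurd h (hpos j).ne'
  -- positivity
  have hupos : ∀ i, 0 < u i := by
    by_contra hcon
    push_neg at hcon
    obtain ⟨j, hj⟩ := hcon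
    have hj0 : u j = 0 := le_antisymm hj (abs_nonneg _)
    have hSnon : ({i | u i ≠ 0} : Set (Fin n)).Nonempty := by
      obtain ⟨i, hi⟩ := Function.ne_iff.mp hvne
      exact ⟨i, by simpa [hu] using hi⟩
    have hSne : ({i | u i ≠ 0} : Set (Fin n)) ≠ Set.univ := by
      intro h
      exact (Set.eq_univ_iff_forall.mp h j) hj0
    obtain ⟨i, hiS, j', hj'S, hBij⟩ := hBirr _ hSnon hSne
    have hj'0 : u j' = 0 := not_not.mp hj'S
    have hsum2 : ∑ k, u k * B k j' = 0 := by
      have := congrFun huB j'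
      simpa [Matrix.vecMul, dotProduct, hj'0] using this
    have hterm := (Finset.sum_eq_zero_iff_of_nonneg
      (fun k _ => mul_nonneg (abs_nonneg _) (hBnn k j'))).mp hsum2 i (Finset.mem_univ _)
    rcases mul_eq_zero.mp hterm with h | h
    · exact hiS.out h
    · exact hBij h
  exact ⟨u, hupos, huB⟩

/-- Uniqueness of positive left fixed vectors up to positive scaling. -/
lemma pf_left_unique {n : ℕ} (hn : 0 < n) (B : Matrix (Fin n) (Fin n) ℝ)
    (hBnn : ∀ i j, 0 ≤ B i j)
    (hBirr : ∀ S : Set (Fin n), S.Nonempty → S ≠ Set.univ → ∃ i ∈ S, ∃ j ∉ S, B i j ≠ 0)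
    (u : Fin n → ℝ) (hu : ∀ i, 0 < u i) (huB : Matrix.vecMul u B = u)
    (w : Fin n → ℝ) (hw : ∀ i, 0 < w i) (hwB : Matrix.vecMul w B = w) :
    ∃ c : ℝ, 0 < c ∧ w = c • u := by
  have : Nonempty (Fin n) := ⟨⟨0, hn⟩⟩
  obtain ⟨i0, -, hi0⟩ := Finset.exists_min_image Finset.univ (fun i => w i / u i)
    ⟨Classical.arbitrary _, Finset.mem_univ _⟩
  set t : ℝ := w i0 / u i0 with ht
  have htpos : 0 < t := div_pos (hw i0) (hu i0)
  refine ⟨t, htpos, ?_⟩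
  set v : Fin n → ℝ := w - t • u with hv
  have hvnn : ∀ i, 0 ≤ v i := by
    intro i
    have h1 : t ≤ w i / u i := hi0 i (Finset.mem_univ _)
    have := (le_div_iff₀ (hu i)).mp h1
    simp [hv]
    linarith
  have hvv : Matrix.vecMul v B = v := by
    rw [hv, Matrix.sub_vecMul, Matrix.smul_vecMul, huB, hwB]
  have hvi0 : v i0 = 0 := by
    simp [hv, ht, div_mul_cancel₀ _ (hu i0).ne']
  have hvzero : ∀ i, v i = 0 := by
    by_contra hcon
    push_neg at hcon
    obtain ⟨j, hj⟩ := hcon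
    have hSne : ({i | v i ≠ 0} : Set (Fin n)) ≠ Set.univ := by
      intro h
      exact (Set.eq_univ_iff_forall.mp h i0) hvi0
    obtain ⟨i, hiS, j', hj'S, hBij⟩ := hBirr _ ⟨j, hj⟩ hSne
    have hj'0 : v j' = 0 := not_not.mp hj'S
    have hsum2 : ∑ k, v k * B k j' = 0 := by
      have := congrFun hvv j'
      simpa [Matrix.vecMul, dotProduct, hj'0] using this
    have hterm := (Finset.sum_eq_zero_iff_of_nonneg
      (fun k _ => mul_nonneg (hvnn k) (hBnn k j'))).mp hsum2 i (Finset.mem_univ _)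
    rcases mul_eq_zero.mp hterm with h | h
    · exact hiS.out h
    · exact hBij h
  exact sub_eq_zero.mp (by simpa [hv] using (funext hvzero : v = 0))
open Matrix

/-- Any complex eigenvalue of a nonnegative matrix with positive eigenvector
`xbar` for eigenvalue 1 has modulus at most 1. -/
lemma pf_abs_le {n : ℕ} (hn : 0 < n) (B : Matrix (Fin n) (Fin n) ℝ) (xbar : Fin n → ℝ)
    (hpos : ∀ i, 0 < xbar i) (hBnn : ∀ i j, 0 ≤ B i j)
    (hBx : B.mulVec xbar = xbar) (lam : ℂ) (v : Fin n → ℂ) (hvne : v ≠ 0)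
    (hv : (B.map (fun a => (a : ℂ))).mulVec v = lam • v) :
    ‖lam‖ ≤ 1 := by
  have : Nonempty (Fin n) := ⟨⟨0, hn⟩⟩
  obtain ⟨i0, -, hi0⟩ := Finset.exists_max_image Finset.univ
    (fun i => ‖v i‖ / xbar i) ⟨Classical.arbitrary _, Finset.mem_univ _⟩
  set t : ℝ := ‖v i0‖ / xbar i0 with ht
  have hub : ∀ j, ‖v j‖ ≤ t * xbar j := by
    intro j
    have h1 : ‖v j‖ / xbar j ≤ t := hi0 j (Finset.mem_univ _)
    have := (div_le_iff₀ (hpos j)).mp h1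
    linarith
  have hti0 : ‖v i0‖ = t * xbar i0 := by
    rw [ht, div_mul_cancel₀ _ (hpos i0).ne']
  have htpos : 0 < t := by
    obtain ⟨j, hj⟩ := Function.ne_iff.mp hvne
    have h1 : 0 < ‖v j‖ := by
      simpa using norm_pos_iff.mpr hj
    have h2 : ‖v j‖ / xbar j ≤ t := hi0 j (Finset.mem_univ _)
    exact lt_of_lt_of_le (div_pos h1 (hpos j)) h2
  -- main estimate at i0
  have hmain : ‖lam‖ * (t * xbar i0) ≤ t * xbar i0 := by
    have h0 : ((B.map (fun a => (a : ℂ))).mulVec v) i0 = lam * v i0 := by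
      rw [hv]; simp
    have h1 : ‖lam * v i0‖ ≤ ∑ j, B i0 j * ‖v j‖ := by
      rw [← h0]
      calc ‖∑ j, (B i0 j : ℂ) * v j‖ ≤ ∑ j, ‖(B i0 j : ℂ) * v j‖ :=
            norm_sum_le _ _
        _ = ∑ j, B i0 j * ‖v j‖ := by
            refine Finset.sum_congr rfl fun j _ => ?_
            rw [norm_mul]
            simp [abs_of_nonneg (hBnn i0 j)]
  
    have h2 : ∑ j, B i0 j * ‖v j‖ ≤ ∑ j, B i0 j * (t * xbar j) := by
      refine Finset.sum_le_sum fun j _ => mul_le_mul_of_nonneg_left (hub j) (hBnn i0 j)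
    have h3 : ∑ j, B i0 j * (t * xbar j) = t * xbar i0 := by
      have := congrFun hBx i0
      simp only [Matrix.mulVec, dotProduct] at this
      calc ∑ j, B i0 j * (t * xbar j) = t * ∑ j, B i0 j * xbar j := by
            rw [Finset.mul_sum]; refine Finset.sum_congr rfl fun j _ => by ring
        _ = t * xbar i0 := by rw [this]
    calc ‖lam‖ * (t * xbar i0) = ‖lam * v i0‖ := by
          rw [norm_mul, hti0]
      _ ≤ ∑ j, B i0 j * ‖v j‖ := h1
      _ ≤ ∑ j, B i0 j * (t * xbar j) := h2
      _ = t * xbar i0 := h3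
  have hpos2 : 0 < t * xbar i0 := mul_pos htpos (hpos i0)
  nlinarith [hmain, hpos2]
open Matrix

lemma pf_mulVec_cast {n : ℕ} (M : Matrix (Fin n) (Fin n) ℝ) (y : Fin n → ℝ) :
    (M.map (fun a => (a : ℂ))).mulVec (fun i => (y i : ℂ)) = fun i => ((M.mulVec y) i : ℂ) := by
  funext i
  simp only [Matrix.mulVec, dotProduct, Matrix.map_apply]
  push_cast
  rfl

lemma pf_eig_mem_iff {n : ℕ} (M : Matrix (Fin n) (Fin n) ℝ) (lam : ℂ) :
    lam ∈ spectrum ℂ (M.map (fun a => (a : ℂ))) ↔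
      ∃ v : Fin n → ℂ, v ≠ 0 ∧ (M.map (fun a => (a : ℂ))).mulVec v = lam • v := by
  rw [spectrum.mem_iff]
  have halg : (algebraMap ℂ (Matrix (Fin n) (Fin n) ℂ)) lam = lam • 1 :=
    Algebra.algebraMap_eq_smul_one lam
  rw [halg]
  constructor
  · intro h
    have hdet : (lam • (1 : Matrix (Fin n) (Fin n) ℂ) - M.map (fun a => (a : ℂ))).det = 0 := by
      by_contra hd
      exact h ((Matrix.isUnit_iff_isUnit_det _).mpr (isUnit_iff_ne_zero.mpr hd))
    obtain ⟨v, hvne, hv⟩ := Matrix.exists_mulVec_eq_zero_iff.mpr hdet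
    refine ⟨v, hvne, ?_⟩
    rw [Matrix.sub_mulVec, Matrix.smul_mulVec, Matrix.one_mulVec] at hv
    have := sub_eq_zero.mp hv
    exact this.symm
  · rintro ⟨v, hvne, hv⟩
    intro h
    have hdet : (lam • (1 : Matrix (Fin n) (Fin n) ℂ) - M.map (fun a => (a : ℂ))).det ≠ 0 :=
      isUnit_iff_ne_zero.mp ((Matrix.isUnit_iff_isUnit_det _).mp h)
    have : ∃ v : Fin n → ℂ, v ≠ 0 ∧
        (lam • (1 : Matrix (Fin n) (Fin n) ℂ) - M.map (fun a => (a : ℂ))).mulVec v = 0 := by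
      refine ⟨v, hvne, ?_⟩
      rw [Matrix.sub_mulVec, Matrix.smul_mulVec, Matrix.one_mulVec, hv, sub_self]
    exact hdet (Matrix.exists_mulVec_eq_zero_iff.mp this)

lemma pf_charpoly_toLin' {n : ℕ} (M : Matrix (Fin n) (Fin n) ℝ) :
    (Matrix.toLin' M).charpoly = M.charpoly := by
  rw [← LinearMap.charpoly_toMatrix (Matrix.toLin' M) (Pi.basisFun ℝ (Fin n)),
    LinearMap.toMatrix_eq_toMatrix', LinearMap.toMatrix'_toLin']


noncomputable def specRad {n : ℕ} (A : Matrix (Fin n) (Fin n) ℝ) : ℝ :=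
  sSup ((fun z : ℂ => ‖z‖) '' eigSet A)

noncomputable def specAbs {n : ℕ} (A : Matrix (Fin n) (Fin n) ℝ) : ℝ :=
  sSup (Complex.re '' eigSet A)

theorem stmt8 {n : ℕ} (A : Matrix (Fin n) (Fin n) ℝ) (xbar : Fin n → ℝ)
    (hAnonneg : ∀ i j, 0 ≤ A i j) (hAirr : MatIrreducible A)
    (hρ : 1 < specRad A)
    (hx : ∀ i, 0 < xbar i ∧ xbar i < 1)
    (heq : (-1 + (1 - Matrix.diagonal xbar) * A).mulVec xbar = 0) :
    specAbs (-1 + (1 - Matrix.diagonal xbar) * A) = 0 ∧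
    -- 0 is a simple eigenvalue (algebraic multiplicity one)
    (Polynomial.rootMultiplicity 0 (-1 + (1 - Matrix.diagonal xbar) * A).charpoly = 1) ∧
    -- there is a positive left eigenvector, unique up to positive scaling,
    -- and the positive right eigenvector `xbar` is unique up to positive scaling
    (∃ u : Fin n → ℝ, (∀ i, 0 < u i) ∧
      Matrix.vecMul u (-1 + (1 - Matrix.diagonal xbar) * A) = 0 ∧
      (∀ w : Fin n → ℝ, (∀ i, 0 < w i) →
        Matrix.vecMul w (-1 + (1 - Matrix.diagonal xbar) * A) = 0 →
        ∃ c : ℝ, 0 < c ∧ w = c • u)) ∧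
    (∀ y : Fin n → ℝ, (∀ i, 0 < y i) →
      (-1 + (1 - Matrix.diagonal xbar) * A).mulVec y = 0 →
      ∃ c : ℝ, 0 < c ∧ y = c • xbar) := by
  classical
  -- Step 0 : n is positive
  have hn : 0 < n := by
    rcases Nat.eq_zero_or_pos n with h0 | h
    · exfalso
      subst h0
      have hempty : eigSet A = ∅ := by
        ext z
        simp only [Set.mem_empty_iff_false, iff_false]
        intro hz
        obtain ⟨v, hvne, -⟩ := (pf_eig_mem_iff A z).mp hz
        exact hvne (funext fun i => i.elim0)
      rw [specRad, hempty, Set.image_empty, Real.sSup_empty] at hρ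
      linarith
    · exact h
  have i0 : Fin n := ⟨0, hn⟩
  have hxpos : ∀ i, 0 < xbar i := fun i => (hx i).1
  set M : Matrix (Fin n) (Fin n) ℝ := -1 + (1 - Matrix.diagonal xbar) * A with hM
  set B : Matrix (Fin n) (Fin n) ℝ := (1 - Matrix.diagonal xbar) * A with hB
  have hMB : M = B - 1 := by rw [hM, hB, neg_add_eq_sub]
  have hBij : ∀ i j, B i j = (1 - xbar i) * A i j := by
    intro i j
    have h1 : (1 : Matrix (Fin n) (Fin n) ℝ) - Matrix.diagonal xbar
        = Matrix.diagonal (fun i => 1 - xbar i) := by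
      rw [← Matrix.diagonal_one, Matrix.diagonal_sub]
    rw [hB, h1, Matrix.diagonal_mul]
  have hBnn : ∀ i j, 0 ≤ B i j := by
    intro i j
    rw [hBij]
    exact mul_nonneg (by linarith [(hx i).2]) (hAnonneg i j)
  have hBirr : ∀ S : Set (Fin n), S.Nonempty → S ≠ Set.univ → ∃ i ∈ S, ∃ j ∉ S, B i j ≠ 0 := by
    intro S hS1 hS2
    obtain ⟨i, hi, j, hj, hij⟩ := hAirr S hS1 hS2
    refine ⟨i, hi, j, hj, ?_⟩
    rw [hBij]
    exact mul_ne_zero (by linarith [(hx i).2]) hij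
  have hMv : ∀ y : Fin n → ℝ, M.mulVec y = B.mulVec y - y := by
    intro y
    rw [hMB, Matrix.sub_mulVec, Matrix.one_mulVec]
  have hMvec : ∀ w : Fin n → ℝ, Matrix.vecMul w M = Matrix.vecMul w B - w := by
    intro w
    rw [hMB, Matrix.vecMul_sub, Matrix.vecMul_one]
  have hBx : B.mulVec xbar = xbar := by
    have h0 : M.mulVec xbar = 0 := heq
    rw [hMv] at h0
    exact sub_eq_zero.mp h0
  have hxne : xbar ≠ 0 := fun h => (hxpos i0).ne' (congrFun h i0)
  -- left eigenvector
  obtain ⟨u, hupos, huB⟩ := pf_left_exists hn B xbar hxpos hBnn hBirr hBx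
  have huM : Matrix.vecMul u M = 0 := by rw [hMvec, huB, sub_self]
  have hudot : 0 < u ⬝ᵥ xbar := by
    refine Finset.sum_pos (fun i _ => mul_pos (hupos i) (hxpos i)) ⟨i0, Finset.mem_univ _⟩
  -- right kernel
  have hker : ∀ y : Fin n → ℝ, M.mulVec y = 0 → ∃ t : ℝ, y = t • xbar := by
    intro y hy
    rw [hMv] at hy
    exact pf_right_ker hn B xbar hxpos hBnn hBirr hBx y (sub_eq_zero.mp hy)
  -- Part A : spectral abscissa
  have partA : specAbs M = 0 := by
    have hmem : (0 : ℂ) ∈ eigSet M := by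
      refine (pf_eig_mem_iff M 0).mpr ⟨fun i => (xbar i : ℂ), ?_, ?_⟩
      · intro h
        have := congrFun h i0
        simp only [Pi.zero_apply, Complex.ofReal_eq_zero] at this
        exact (hxpos i0).ne' this
      · rw [pf_mulVec_cast, heq]
        funext i
        simp
    have hub : ∀ r ∈ Complex.re '' eigSet M, r ≤ 0 := by
      rintro r ⟨lam, hlam, rfl⟩
      obtain ⟨v, hvne, hv⟩ := (pf_eig_mem_iff M lam).mp hlam
      have hMBC : M.map (fun a => (a : ℂ)) = B.map (fun a => (a : ℂ)) - 1 := by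
        rw [hMB]
        ext i j
        by_cases hij : i = j <;>
          simp [Matrix.map_apply, Matrix.sub_apply, Matrix.one_apply, hij]
      have hvB : (B.map (fun a => (a : ℂ))).mulVec v = (lam + 1) • v := by
        have h1 : (M.map (fun a => (a : ℂ))).mulVec v
            = (B.map (fun a => (a : ℂ))).mulVec v - v := by
          rw [hMBC, Matrix.sub_mulVec, Matrix.one_mulVec]
        rw [h1] at hv
        have h2 := sub_eq_iff_eq_add.mp hv
        rw [h2]
        funext i
        simp only [Pi.add_apply, Pi.smul_apply, smul_eq_mul]
        ring
      have habs := pf_abs_le hn B xbar hxpos hBnn hBx (lam + 1) v hvne hvB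
      have hre := Complex.re_le_norm (lam + 1)
      simp only [Complex.add_re, Complex.one_re] at hre
      linarith
    exact IsGreatest.csSup_eq ⟨⟨0, hmem, Complex.zero_re⟩, hub⟩
  -- Part B : algebraic multiplicity one
  have partB : Polynomial.rootMultiplicity 0 M.charpoly = 1 := by
    set φ : Module.End ℝ (Fin n → ℝ) := Matrix.toLin' M with hφ
    have hclaim : ∀ (k : ℕ) (x : Fin n → ℝ), (φ ^ k) x = 0 → x ∈ Submodule.span ℝ {xbar} := by
      intro k
      induction k with
      | zero =>
        intro x hx0
        simp only [pow_zero, Module.End.one_apply] at hx0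
        rw [hx0]
        exact Submodule.zero_mem _
      | succ k ih =>
        intro x hx0
        rw [pow_succ, Module.End.mul_apply] at hx0
        have hmem := ih (φ x) hx0
        obtain ⟨c, hc⟩ := Submodule.mem_span_singleton.mp hmem
        have hφx : φ x = M.mulVec x := Matrix.toLin'_apply M x
        have hdot : u ⬝ᵥ (M.mulVec x) = 0 := by
          rw [Matrix.dotProduct_mulVec, huM, zero_dotProduct]
        have hcu : c * (u ⬝ᵥ xbar) = 0 := by
          have h1 : u ⬝ᵥ (c • xbar) = c * (u ⬝ᵥ xbar) := by
            simp only [dotProduct, Pi.smul_apply, smul_eq_mul, Finset.mul_sum]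
            exact Finset.sum_congr rfl fun i _ => by ring
          calc c * (u ⬝ᵥ xbar) = u ⬝ᵥ (c • xbar) := h1.symm
            _ = u ⬝ᵥ (M.mulVec x) := by rw [hc, hφx]
            _ = 0 := hdot
        have hc0 : c = 0 := by
          rcases mul_eq_zero.mp hcu with h | h
          · exact h
          · exact absurd h hudot.ne'
        have hMx0 : M.mulVec x = 0 := by
          rw [← hφx, ← hc, hc0, zero_smul]
        obtain ⟨t, ht⟩ := hker x hMx0
        exact Submodule.mem_span_singleton.mpr ⟨t, ht.symm⟩
    have hspan : φ.maxGenEigenspace 0 = Submodule.span ℝ {xbar} := by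
      apply le_antisymm
      · intro x hx0
        obtain ⟨k, hk⟩ := (Module.End.mem_maxGenEigenspace φ 0 x).mp hx0
        simp only [zero_smul, sub_zero] at hk
        exact hclaim k x hk
      · rw [Submodule.span_le, Set.singleton_subset_iff]
        refine (Module.End.mem_maxGenEigenspace φ 0 xbar).mpr ⟨1, ?_⟩
        simp only [zero_smul, sub_zero, pow_one]
        rw [hφ]
        rw [Matrix.toLin'_apply]
        exact heq
    have hfr : Module.finrank ℝ (φ.maxGenEigenspace 0) = 1 := by
      rw [hspan]
      exact finrank_span_singleton hxne
    rw [Polynomial.rootMultiplicity_eq_natTrailingDegree', ← pf_charpoly_toLin' M,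
      ← LinearMap.finrank_maxGenEigenspace_zero_eq]
    exact hfr
  refine ⟨partA, partB, ⟨u, hupos, huM, ?_⟩, ?_⟩
  · -- left uniqueness
    intro w hwpos hwM
    have hwB : Matrix.vecMul w B = w := by
      have := hMvec w
      rw [hwM] at this
      exact (sub_eq_zero.mp this.symm)
    exact pf_left_unique hn B hBnn hBirr u hupos huB w hwpos hwB
  · -- right uniqueness
    intro y hypos hyM
    obtain ⟨t, ht⟩ := hker y hyM
    refine ⟨t, ?_, ht⟩
    have h1 : y i0 = t * xbar i0 := by rw [ht]; rfl
    nlinarith [hypos i0, hxpos i0]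
end

section
/- Let X̄ = diag(x̄) with 0 < x̄_i < 1 for all i, and let B' be an irreducible nonnegative matrix satisfying [I - (I-X̄)B'] x̄ = 0. Then the matrix F = (I-X̄)^{-2} - B' is an irreducible nonsingular M-matrix, and hence F^{-1} is a positive matrix. -/
open Matrix

/-- A nonsingular M-matrix: `-F` is Metzler and all eigenvalues have positive real part. -/
def IsNonsingularMMatrix {n : ℕ} (F : Matrix (Fin n) (Fin n) ℝ) : Prop :=
  IsMetzler (-F) ∧ ∀ μ ∈ eigSet F, 0 < μ.re

section Aux

attribute [local instance] Matrix.linftyOpNormedRing Matrix.linftyOpNormedAlgebra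

/-- entries of powers of an entrywise-nonneg matrix are nonneg -/
lemma aux_pow_nonneg {n : ℕ} {M : Matrix (Fin n) (Fin n) ℝ} (hM : ∀ i j, 0 ≤ M i j) :
    ∀ k i j, 0 ≤ (M ^ k) i j := by
  intro k
  induction k with
  | zero => intro i j; simp [Matrix.one_apply]; positivity
  | succ k ih =>
    intro i j
    rw [pow_succ, Matrix.mul_apply]
    exact Finset.sum_nonneg fun t _ => mul_nonneg (ih i t) (hM t j)

/-- reachability: for irreducible nonneg matrix, some power has positive (i,j) entry -/
lemma aux_reach {n : ℕ} {M : Matrix (Fin n) (Fin n) ℝ} (hM : ∀ i j, 0 ≤ M i j)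
    (hirr : MatIrreducible M) (i j : Fin n) : ∃ k, 0 < (M ^ k) i j := by
  set S : Set (Fin n) := {b | ∃ k, 0 < (M ^ k) i b} with hS
  have hiS : i ∈ S := ⟨0, by simp [Matrix.one_apply]⟩
  by_contra hj
  have hjS : j ∉ S := hj
  have hne : S ≠ Set.univ := fun h => hjS (h ▸ Set.mem_univ j)
  obtain ⟨a, haS, b, hbS, hab⟩ := hirr S ⟨i, hiS⟩ hne
  obtain ⟨k, hk⟩ := haS
  apply hbS
  refine ⟨k + 1, ?_⟩
  rw [pow_succ, Matrix.mul_apply]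
  have hterm : 0 < (M ^ k) i a * M a b :=
    mul_pos hk (lt_of_le_of_ne (hM a b) (Ne.symm hab))
  calc (0:ℝ) < (M ^ k) i a * M a b := hterm
    _ ≤ ∑ t, (M ^ k) i t * M t b := by
        refine Finset.single_le_sum (f := fun t => (M ^ k) i t * M t b)
          (fun t _ => mul_nonneg (aux_pow_nonneg hM k i t) (hM t b)) (Finset.mem_univ a)

/-- entry bound for linfty operator norm -/
lemma aux_entry_le {n : ℕ} (A : Matrix (Fin n) (Fin n) ℝ) (i j : Fin n) :
    |A i j| ≤ ‖A‖ := by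
  have h1 : ‖A i j‖₊ ≤ ∑ t, ‖A i t‖₊ :=
    Finset.single_le_sum (f := fun t => ‖A i t‖₊) (fun t _ => zero_le) (Finset.mem_univ j)
  have h2 : (∑ t, ‖A i t‖₊) ≤ (Finset.univ.sup fun i => ∑ t, ‖A i t‖₊) :=
    Finset.le_sup (f := fun i => ∑ t, ‖A i t‖₊) (Finset.mem_univ i)
  have := Matrix.linfty_opNorm_def A
  rw [this]
  calc |A i j| = (‖A i j‖₊ : ℝ) := rfl
    _ ≤ ((∑ t, ‖A i t‖₊ : NNReal) : ℝ) := by exact_mod_cast h1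
    _ ≤ _ := by exact_mod_cast h2



theorem stmt15 {n : ℕ} (B' : Matrix (Fin n) (Fin n) ℝ) (xbar : Fin n → ℝ)
    (hBnonneg : ∀ i j, 0 ≤ B' i j) (hBirr : MatIrreducible B')
    (hx : ∀ i, 0 < xbar i ∧ xbar i < 1)
    (heq : (1 - (1 - Matrix.diagonal xbar) * B').mulVec xbar = 0) :
    MatIrreducible (Matrix.diagonal (fun i => ((1 - xbar i)⁻¹) ^ 2) - B') ∧
    IsNonsingularMMatrix (Matrix.diagonal (fun i => ((1 - xbar i)⁻¹) ^ 2) - B') ∧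
    ∀ i j, 0 < (Matrix.diagonal (fun i => ((1 - xbar i)⁻¹) ^ 2) - B')⁻¹ i j := by
  classical
  set d : Fin n → ℝ := fun i => ((1 - xbar i)⁻¹) ^ 2 with hd
  set F : Matrix (Fin n) (Fin n) ℝ := Matrix.diagonal d - B' with hF
  have hx0 : ∀ i, 0 < xbar i := fun i => (hx i).1
  have hy0 : ∀ i, 0 < 1 - xbar i := fun i => by linarith [(hx i).2]
  -- the equilibrium identity
  have hBv : ∀ i, B'.mulVec xbar i = xbar i * (1 - xbar i)⁻¹ := by
    intro i
    have h0 := congrFun heq i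
    rw [Matrix.sub_mulVec, Matrix.one_mulVec] at h0
    have h1 : ((1 - Matrix.diagonal xbar) * B').mulVec xbar i
        = (1 - xbar i) * B'.mulVec xbar i := by
      rw [← Matrix.mulVec_mulVec]
      have : (1 - Matrix.diagonal xbar) = Matrix.diagonal (fun j => 1 - xbar j) := by
        rw [← Matrix.diagonal_one, ← Matrix.diagonal_sub]
      rw [this, Matrix.mulVec_diagonal]
    simp only [Pi.sub_apply, Pi.zero_apply, h1] at h0
    have h2 : xbar i = (1 - xbar i) * B'.mulVec xbar i := by linarith
    calc B'.mulVec xbar i = (1 - xbar i) * B'.mulVec xbar i * (1 - xbar i)⁻¹ := by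
          rw [mul_comm (1 - xbar i), mul_assoc, mul_inv_cancel₀ (ne_of_gt (hy0 i)), mul_one]
      _ = xbar i * (1 - xbar i)⁻¹ := by rw [← h2]
  -- positivity of F xbar
  have hr : ∀ i, 0 < F.mulVec xbar i := by
    intro i
    have hstep : F.mulVec xbar i
        = ((1 - xbar i)⁻¹) ^ 2 * xbar i - xbar i * (1 - xbar i)⁻¹ := by
      rw [hF, Matrix.sub_mulVec]
      simp only [Pi.sub_apply, Matrix.mulVec_diagonal, hBv, hd]
    rw [hstep]
    have h1t : 1 < (1 - xbar i)⁻¹ := (one_lt_inv₀ (hy0 i)).mpr (by linarith [hx0 i])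
    nlinarith [mul_pos (hx0 i) (mul_pos (lt_trans one_pos h1t) (sub_pos.mpr h1t))]
  -- shift constant
  set c : ℝ := 1 + ∑ i, d i with hc
  have hd0 : ∀ i, 0 < d i := fun i => pow_pos (inv_pos.mpr (hy0 i)) 2
  have hcd : ∀ i, d i < c := by
    intro i
    have h1 : d i ≤ ∑ j, d j := Finset.single_le_sum (fun j _ => (hd0 j).le) (Finset.mem_univ i)
    rw [hc]; linarith
  have hc0 : 0 < c := by
    have : (0:ℝ) ≤ ∑ i, d i := Finset.sum_nonneg fun i _ => (hd0 i).le
    rw [hc]; linarith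
  set N : Matrix (Fin n) (Fin n) ℝ := c • (1 : Matrix (Fin n) (Fin n) ℝ) - F with hN
  have hNentry : ∀ i j, N i j = (if i = j then c - d i else 0) + B' i j := by
    intro i j
    simp only [hN, hF, Matrix.sub_apply, Matrix.smul_apply, Matrix.one_apply,
      Matrix.diagonal_apply, smul_eq_mul]
    by_cases h : i = j <;> simp [h] <;> ring
  have hN0 : ∀ i j, 0 ≤ N i j := by
    intro i j
    rw [hNentry]
    have := hBnonneg i j
    split_ifs with h
    · have := hcd i; linarith
    · linarith
  have hNx : ∀ i, N.mulVec xbar i = c * xbar i - F.mulVec xbar i := by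
    intro i
    rw [hN, Matrix.sub_mulVec, Matrix.smul_mulVec, Matrix.one_mulVec]
    simp
  set M : Matrix (Fin n) (Fin n) ℝ :=
    Matrix.of (fun i j => (xbar i)⁻¹ * N i j * xbar j * c⁻¹) with hM
  have hMentry : ∀ i j, M i j = (xbar i)⁻¹ * N i j * xbar j * c⁻¹ := fun i j => rfl
  have hM0 : ∀ i j, 0 ≤ M i j := by
    intro i j
    rw [hMentry]
    have h1 := hN0 i j
    have h2 := (hx0 i); have h3 := hx0 j
    positivity
  have hrow : ∀ i, ∑ j, M i j < 1 := by
    intro i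
    have hsum : ∑ j, M i j = (N.mulVec xbar i) * ((xbar i)⁻¹ * c⁻¹) := by
      rw [Matrix.mulVec, dotProduct, Finset.sum_mul]
      apply Finset.sum_congr rfl
      intro j _
      rw [hMentry]; ring
    rw [hsum, hNx]
    have h1 := hr i
    have h2 := hx0 i
    have hlt : (c * xbar i - F.mulVec xbar i) * ((xbar i)⁻¹ * c⁻¹)
        < (c * xbar i) * ((xbar i)⁻¹ * c⁻¹) := by
      apply mul_lt_mul_of_pos_right (by linarith)
      positivity
    have heq1 : (c * xbar i) * ((xbar i)⁻¹ * c⁻¹) = 1 := by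
      field_simp
    linarith [hlt, heq1.le, heq1.ge]
  -- the linfty operator norm of M is < 1
  have hMnorm : ‖M‖ < 1 := by
    rw [Matrix.linfty_opNorm_def]
    have hsup : (Finset.univ.sup fun i => ∑ j, ‖M i j‖₊) < 1 := by
      rw [Finset.sup_lt_iff (by norm_num : (⊥ : NNReal) < 1)]
      intro i _
      rw [← NNReal.coe_lt_coe]
      push_cast
      have : ∀ j, (‖M i j‖₊ : ℝ) = M i j := fun j => by
        simp [coe_nnnorm, Real.norm_eq_abs, abs_of_nonneg (hM0 i j)]
      calc (∑ j, (‖M i j‖₊ : ℝ)) = ∑ j, M i j := Finset.sum_congr rfl fun j _ => this j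
        _ < 1 := hrow i
    exact_mod_cast hsup
  have hsummable : Summable (fun k : ℕ => M ^ k) := summable_geometric_of_norm_lt_one hMnorm
  -- entry evaluation as a continuous linear map
  have entry_eval : ∀ i j : Fin n, ∃ φ : Matrix (Fin n) (Fin n) ℝ →L[ℝ] ℝ,
      ∀ A, φ A = A i j := by
    intro i j
    refine ⟨LinearMap.mkContinuous
      { toFun := fun A => A i j
        map_add' := fun A B => rfl
        map_smul' := fun r A => rfl } 1 ?_, fun A => rfl⟩
    intro A
    have := aux_entry_le A i j; rw [one_mul]; exact (Real.norm_eq_abs _).trans_le this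
  set T : Matrix (Fin n) (Fin n) ℝ := ∑' k : ℕ, M ^ k with hT
  have hTentry : ∀ i j, Summable (fun k => (M ^ k) i j) ∧ T i j = ∑' k, (M ^ k) i j := by
    intro i j
    obtain ⟨φ, hφ⟩ := entry_eval i j
    have hsum2 : Summable (fun k => φ (M ^ k)) :=
      hsummable.map (φ : Matrix (Fin n) (Fin n) ℝ →+ ℝ) φ.continuous
    have hmap : φ T = ∑' k, φ (M ^ k) := φ.map_tsum hsummable
    constructor
    · simpa only [hφ] using hsum2
    · have := hmap
      simp only [hφ] at this
      exact this
  -- M is irreducible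
  have hMirr : MatIrreducible M := by
    intro S hS1 hS2
    obtain ⟨i, hiS, j, hjS, hij⟩ := hBirr S hS1 hS2
    refine ⟨i, hiS, j, hjS, ?_⟩
    have hne : i ≠ j := fun h => hjS (h ▸ hiS)
    have hBpos : 0 < B' i j := lt_of_le_of_ne (hBnonneg i j) (Ne.symm hij)
    have : M i j = (xbar i)⁻¹ * B' i j * xbar j * c⁻¹ := by
      rw [hMentry, hNentry, if_neg hne, zero_add]
    rw [this]
    have h1 := hx0 i; have h2 := hx0 j
    positivity
  have hTpos : ∀ i j, 0 < T i j := by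
    intro i j
    obtain ⟨k0, hk0⟩ := aux_reach hM0 hMirr i j
    obtain ⟨hsum', heqT⟩ := hTentry i j
    rw [heqT]
    calc (0:ℝ) < (M ^ k0) i j := hk0
      _ ≤ ∑' k, (M ^ k) i j :=
          Summable.le_tsum hsum' k0 (fun k _ => aux_pow_nonneg hM0 k i j)
  -- geometric series identities
  have hunit1 : (1 - M) * T = 1 := mul_neg_geom_series M hMnorm
  have hunit2 : T * (1 - M) = 1 := geom_series_mul_neg M hMnorm
  -- diagonal conjugation matrices
  set W : Matrix (Fin n) (Fin n) ℝ := Matrix.diagonal xbar with hW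
  set W' : Matrix (Fin n) (Fin n) ℝ := Matrix.diagonal (fun i => (xbar i)⁻¹) with hW'
  have hWW' : W * W' = 1 := by
    rw [hW, hW', Matrix.diagonal_mul_diagonal]
    have h : (fun i => xbar i * (xbar i)⁻¹) = fun _ => (1:ℝ) := by
      funext i; exact mul_inv_cancel₀ (ne_of_gt (hx0 i))
    rw [h, Matrix.diagonal_one]
  have hW'W : W' * W = 1 := by
    rw [hW, hW', Matrix.diagonal_mul_diagonal]
    have h : (fun i => (xbar i)⁻¹ * xbar i) = fun _ => (1:ℝ) := by
      funext i; exact inv_mul_cancel₀ (ne_of_gt (hx0 i))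
    rw [h, Matrix.diagonal_one]
  -- factorization F = c • (W * (1 - M) * W')
  have hfact : F = c • (W * (1 - M) * W') := by
    ext i j
    have hL : (W * ((1 - M) * W')) i j = xbar i * (((1 - M) * W') i j) := by
      rw [hW, Matrix.diagonal_mul]
    have hR : ((1 - M) * W') i j = ((1:Matrix (Fin n) (Fin n) ℝ) - M) i j * (xbar j)⁻¹ := by
      rw [hW', Matrix.mul_diagonal]
    have h1M : ((1:Matrix (Fin n) (Fin n) ℝ) - M) i j
        = (if i = j then (1:ℝ) else 0) - M i j := by
      simp [Matrix.sub_apply, Matrix.one_apply]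
    have hFij : F i j = (if i = j then d i else 0) - B' i j := by
      simp [hF, Matrix.sub_apply, Matrix.diagonal_apply]
    have hNij := hNentry i j
    rw [Matrix.smul_apply, Matrix.mul_assoc, hL, hR, h1M, hMentry, hNij, hFij, smul_eq_mul]
    have hxi := ne_of_gt (hx0 i); have hxj := ne_of_gt (hx0 j)
    have hcne := ne_of_gt hc0
    by_cases h : i = j
    · subst h; simp only [if_pos rfl, ↓reduceIte]; field_simp; ring
    · simp only [if_neg h]; field_simp; ring
  -- inverse of F
  have hFinv : F⁻¹ = c⁻¹ • (W * T * W') := by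
    apply Matrix.inv_eq_right_inv
    rw [hfact, Matrix.smul_mul, Matrix.mul_smul, smul_smul,
      mul_inv_cancel₀ (ne_of_gt hc0), one_smul]
    calc W * (1 - M) * W' * (W * T * W')
        = W * (1 - M) * (W' * W) * (T * W') := by
          simp only [Matrix.mul_assoc]
      _ = W * ((1 - M) * T) * W' := by
          rw [hW'W]
          simp only [Matrix.mul_one, Matrix.mul_assoc]
      _ = 1 := by rw [hunit1, Matrix.mul_one, hWW']
  have hFinvPos : ∀ i j, 0 < F⁻¹ i j := by
    intro i j
    rw [hFinv, Matrix.smul_apply, smul_eq_mul, Matrix.mul_assoc]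
    have h1 : (W * (T * W')) i j = xbar i * ((T * W') i j) := by
      rw [hW, Matrix.diagonal_mul]
    have h2 : (T * W') i j = T i j * (xbar j)⁻¹ := by
      rw [hW', Matrix.mul_diagonal]
    rw [h1, h2]
    have := hTpos i j
    have hxi := hx0 i; have hxj := hx0 j
    positivity
  -- irreducibility of F
  have hFirr : MatIrreducible F := by
    intro S hS1 hS2
    obtain ⟨i, hiS, j, hjS, hij⟩ := hBirr S hS1 hS2
    refine ⟨i, hiS, j, hjS, ?_⟩
    have hne : i ≠ j := fun h => hjS (h ▸ hiS)
    have : F i j = -B' i j := by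
      simp [hF, Matrix.sub_apply, Matrix.diagonal_apply_ne _ hne]
    rw [this]
    simpa using hij
  -- Metzler property of -F
  have hMetz : IsMetzler (-F) := by
    intro i j hne
    have : (-F) i j = B' i j := by
      simp [hF, Matrix.sub_apply, Matrix.diagonal_apply_ne _ hne]
    rw [this]; exact hBnonneg i j
  -- eigenvalue bound
  have heig : ∀ μ ∈ eigSet F, 0 < μ.re := by
    intro μ hμ
    set Gm : Matrix (Fin n) (Fin n) ℝ := c • ((1:Matrix (Fin n) (Fin n) ℝ) - M) with hGm
    have hFW : F = W * Gm * W' := by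
      rw [hfact, hGm, Matrix.mul_smul, Matrix.smul_mul]
    set toC : Matrix (Fin n) (Fin n) ℝ → Matrix (Fin n) (Fin n) ℂ :=
      fun A => A.map (fun a => (a : ℂ)) with htoC
    have hmapmul : ∀ A B : Matrix (Fin n) (Fin n) ℝ, toC (A * B) = toC A * toC B := by
      intro A B
      exact Matrix.map_mul (f := Complex.ofRealHom)
    have hmapone : toC (1 : Matrix (Fin n) (Fin n) ℝ) = 1 :=
      Matrix.map_one _ Complex.ofReal_zero Complex.ofReal_one
    have hWu1 : toC W * toC W' = 1 := by rw [← hmapmul, hWW', hmapone]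
    have hWu2 : toC W' * toC W = 1 := by rw [← hmapmul, hW'W, hmapone]
    set u : (Matrix (Fin n) (Fin n) ℂ)ˣ := ⟨toC W, toC W', hWu1, hWu2⟩ with hu
    have hμ2 : μ ∈ spectrum ℂ (toC Gm) := by
      have h0 : eigSet F = spectrum ℂ (toC F) := rfl
      have h1 : toC F = (u : Matrix (Fin n) (Fin n) ℂ) * toC Gm
          * ((u⁻¹ : (Matrix (Fin n) (Fin n) ℂ)ˣ) : Matrix (Fin n) (Fin n) ℂ) := by
        rw [hFW, hmapmul, hmapmul]; rfl
      rw [h0, h1, spectrum.units_conjugate] at hμ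
      exact hμ
    have hEig : Module.End.HasEigenvalue (Matrix.toLin' (toC Gm)) μ := by
      rw [Module.End.hasEigenvalue_iff_mem_spectrum]
      have h1 : Matrix.toLin' (toC Gm) = Matrix.toLinAlgEquiv' (toC Gm) :=
        LinearMap.ext fun v => by
          rw [Matrix.toLin'_apply, Matrix.toLinAlgEquiv'_apply]
      rw [h1, AlgEquiv.spectrum_eq]
      exact hμ2
    obtain ⟨k, hk⟩ := eigenvalue_mem_ball hEig
    have hGmentry : ∀ a b, Gm a b = c * ((if a = b then (1:ℝ) else 0) - M a b) := by
      intro a b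
      simp [hGm, Matrix.smul_apply, Matrix.sub_apply, Matrix.one_apply]
    have hGmC : ∀ a b, (toC Gm) a b = ((Gm a b : ℝ) : ℂ) := fun a b => rfl
    have hdist : dist μ ((Gm k k : ℝ) : ℂ) ≤ ∑ j ∈ Finset.univ.erase k, ‖(toC Gm) k j‖ := by
      simpa [Metric.mem_closedBall, hGmC] using hk
    have hsumR : ∑ j ∈ Finset.univ.erase k, ‖(toC Gm) k j‖
        = c * ∑ j ∈ Finset.univ.erase k, M k j := by
      rw [Finset.mul_sum]
      apply Finset.sum_congr rfl
      intro j hj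
      have hjk : j ≠ k := Finset.ne_of_mem_erase hj
      rw [hGmC, Complex.norm_real, Real.norm_eq_abs, hGmentry,
        if_neg (fun h => hjk h.symm)]
      rw [abs_of_nonpos (by nlinarith [hM0 k j, hc0])]
      ring
    have h1 : |μ.re - Gm k k| ≤ dist μ ((Gm k k : ℝ) : ℂ) := by
      have h2 : (μ - ((Gm k k : ℝ) : ℂ)).re = μ.re - Gm k k := by simp
      rw [Complex.dist_eq]
      calc |μ.re - Gm k k| = |(μ - ((Gm k k : ℝ) : ℂ)).re| := by rw [h2]
        _ ≤ ‖μ - ((Gm k k : ℝ) : ℂ)‖ := Complex.abs_re_le_norm _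
    have hGkk : Gm k k = c * (1 - M k k) := by rw [hGmentry]; simp
    have hsplit : M k k + ∑ j ∈ Finset.univ.erase k, M k j = ∑ j, M k j :=
      Finset.add_sum_erase _ _ (Finset.mem_univ k)
    have hfin : Gm k k - c * ∑ j ∈ Finset.univ.erase k, M k j
        = c * (1 - ∑ j, M k j) := by
      rw [hGkk, ← hsplit]; ring
    have hposrow : 0 < c * (1 - ∑ j, M k j) := mul_pos hc0 (by linarith [hrow k])
    have habs : -(|μ.re - Gm k k|) ≤ μ.re - Gm k k := neg_abs_le _
    linarith [hdist, h1, hfin, hposrow, habs, hsumR.le, hsumR.ge]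
  exact ⟨hFirr, ⟨hMetz, heig⟩, hFinvPos⟩



end Aux
end

section
/- Let B' be irreducible nonnegative with [I - (I-X̄)B'] x̄ = 0 where X̄ = diag(x̄), 0 < x̄ < 1 entrywise, and let v^T > 0 be the left eigenvector of (I-X̄)B' for eigenvalue 1. Suppose δB satisfies δB x̄ = [(I-X̄)^{-2} - B'] δx for some δx ∈ R^n. Then v^T (I-X̄) δB x̄ < 0 if and only if v^T (I-X̄)^{-1} X̄ δx < 0. -/
open Matrix

theorem stmt17 {n : ℕ} (B' δB : Matrix (Fin n) (Fin n) ℝ)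
    (xbar v δx : Fin n → ℝ)
    (hBnonneg : ∀ i j, 0 ≤ B' i j) (hBirr : MatIrreducible B')
    (hx : ∀ i, 0 < xbar i ∧ xbar i < 1)
    (heq : (1 - (1 - Matrix.diagonal xbar) * B').mulVec xbar = 0)
    (hv : ∀ i, 0 < v i)
    (hvL : Matrix.vecMul v ((1 - Matrix.diagonal xbar) * B') = v)
    (hδB : δB.mulVec xbar =
      (Matrix.diagonal (fun i => ((1 - xbar i)⁻¹) ^ 2) - B').mulVec δx) :
    (dotProduct v (((1 - Matrix.diagonal xbar) * δB).mulVec xbar) < 0 ↔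
      dotProduct v
        ((Matrix.diagonal (fun i => (1 - xbar i)⁻¹ * xbar i)).mulVec δx) < 0) := by
  have key : dotProduct v (((1 - Matrix.diagonal xbar) * δB).mulVec xbar)
      = dotProduct v
        ((Matrix.diagonal (fun i => (1 - xbar i)⁻¹ * xbar i)).mulVec δx) := by
    rw [← Matrix.mulVec_mulVec, Matrix.dotProduct_mulVec, hδB, Matrix.sub_mulVec,
      dotProduct_sub, ← Matrix.dotProduct_mulVec, Matrix.dotProduct_mulVec _ B',
      Matrix.vecMul_vecMul, hvL]
    have h1 : ∀ i, (1 : ℝ) - xbar i ≠ 0 := fun i => by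
      have := (hx i).2; linarith
    have hd : (1 - Matrix.diagonal xbar) = Matrix.diagonal (fun i => 1 - xbar i) := by
      rw [← Matrix.diagonal_one, ← Matrix.diagonal_sub]
    rw [hd]
    simp only [dotProduct, Matrix.mulVec_diagonal, ← Finset.sum_sub_distrib]
    refine Finset.sum_congr rfl fun i _ => ?_
    field_simp [h1 i]
    ring
  rw [key]
end
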